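/- Interaction $L^2$ energy estimate for two interfaces: Let $C_\infty \in \mathbb{R}$ and let $f, g : \mathbb{R}^2 \to \mathbb{R}$ be differentiable with $f - C_\infty \in L^2(\mathbb{R}^2)$, $\nabla f$ and $\nabla g$ bounded, and $D := \sup_{x,y} d(f,g)(x,y) < \infty$. Then there is a universal constant $C$ such that $\int_{\mathbb{R}^2} \int_{\mathbb{R}^2} |f(x) - C_\infty|^2 \, \frac{|f(x) - g(x-y)| \, |(\nabla f(x) - \nabla g(x-y)) \cdot y|}{[|y|^2 + (f(x) - g(x-y))^2]^{5/2}}\, dx\, dy \le C\, \|f - C_\infty\|_{L^2}^2 \, \big(\sup_x|\nabla f(x)| + \sup_x|\nabla g(x)|\big) \, (D^3 + 1)$. -/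

import Mathlib

open MeasureTheory Filter Topology Real Set
open scoped RealInnerProductSpace ENNReal

noncomputable section

abbrev E2 := EuclideanSpace ℝ (Fin 2)

/-- `d(f,g)(x,y) = [|y|² + (f(x)-g(x-y))²]^{-1/2}`. -/
def dd (f g : E2 → ℝ) (x y : E2) : ℝ :=
  (‖y‖ ^ 2 + (f x - g (x - y)) ^ 2) ^ (-(1 / 2 : ℝ))

/-- The `L²(ℝ²)` norm of a function. -/
def l2norm (h : E2 → ℝ) : ℝ := (∫ x : E2, (h x) ^ 2) ^ (1 / 2 : ℝ)

/-- Scalar kernel bound: for `0 < s` with `u² ≤ s` and `s^{-1/2} ≤ D`, one has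
`s^{-3/2} ≤ 2^{3/2} (D³+1) (1+u²)^{-3/2}`. -/
lemma aux_kernel_bound (s u D : ℝ) (hs : 0 < s) (hsu : u ^ 2 ≤ s)
    (hD : s ^ (-(1 / 2 : ℝ)) ≤ D) :
    s ^ (-(3 : ℝ) / 2) ≤ 2 ^ ((3 : ℝ) / 2) * (D ^ 3 + 1) * ((1 + u ^ 2) ^ (-(3 : ℝ) / 2)) := by
  have hD0 : 0 ≤ D := le_trans (Real.rpow_nonneg hs.le _) hD
  have hw0 : (0 : ℝ) < 1 + u ^ 2 := by positivity
  have hwn : 0 ≤ (1 + u ^ 2) ^ (-(3 : ℝ) / 2) := Real.rpow_nonneg hw0.le _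
  have htn : (0 : ℝ) ≤ 2 ^ ((3 : ℝ) / 2) := Real.rpow_nonneg (by norm_num) _
  rcases le_or_gt (u ^ 2) 1 with h1 | h1
  · have hcube : s ^ (-(3 : ℝ) / 2) ≤ D ^ 3 := by
      have h2 : s ^ (-(3 : ℝ) / 2) = (s ^ (-(1 / 2 : ℝ))) ^ (3 : ℕ) := by
        rw [← Real.rpow_natCast (s ^ (-(1 / 2 : ℝ))) 3, ← Real.rpow_mul hs.le]
        norm_num
      rw [h2]
      exact pow_le_pow_left₀ (Real.rpow_nonneg hs.le _) hD 3
    have h2 : (2 : ℝ) ^ (-(3 : ℝ) / 2) ≤ (1 + u ^ 2) ^ (-(3 : ℝ) / 2) :=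
      Real.rpow_le_rpow_of_nonpos hw0 (by nlinarith) (by norm_num)
    have h3 : (1 : ℝ) ≤ 2 ^ ((3 : ℝ) / 2) * (1 + u ^ 2) ^ (-(3 : ℝ) / 2) := by
      have h4 := mul_le_mul_of_nonneg_left h2 htn
      calc (1 : ℝ) = 2 ^ ((3 : ℝ) / 2) * 2 ^ (-(3 : ℝ) / 2) := by
            rw [← Real.rpow_add (by norm_num : (0:ℝ) < 2)]; norm_num
        _ ≤ _ := h4
    nlinarith [mul_le_mul_of_nonneg_left h3 (pow_nonneg hD0 3), pow_nonneg hD0 3,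
      mul_nonneg htn hwn]
  · have hs2 : (1 + u ^ 2) / 2 ≤ s := by nlinarith
    have h2 : s ^ (-(3 : ℝ) / 2) ≤ ((1 + u ^ 2) / 2) ^ (-(3 : ℝ) / 2) :=
      Real.rpow_le_rpow_of_nonpos (by positivity) hs2 (by norm_num)
    have h3 : ((1 + u ^ 2) / 2) ^ (-(3 : ℝ) / 2)
        = 2 ^ ((3 : ℝ) / 2) * (1 + u ^ 2) ^ (-(3 : ℝ) / 2) := by
      rw [Real.div_rpow hw0.le (by norm_num : (0:ℝ) ≤ 2), div_eq_mul_inv,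
        ← Real.rpow_neg (by norm_num : (0:ℝ) ≤ 2)]
      norm_num
      ring
    rw [h3] at h2
    nlinarith [mul_nonneg htn hwn, pow_nonneg hD0 3]

set_option maxHeartbeats 1000000 in
/-- **Interaction `L²` energy estimate for two interfaces.**  There is a universal constant
`C` such that whenever `f, g` are differentiable with bounded gradients, `f - C∞ ∈ L²`, and
`D = sup d(f,g) < ∞`,
`∫∫ |f(x)-C∞|² |f(x)-g(x-y)| |(∇f(x)-∇g(x-y))⬝y| / [|y|²+(f(x)-g(x-y))²]^{5/2} dx dy
  ≤ C ‖f-C∞‖²_{L²} (sup|∇f| + sup|∇g|)(D³+1)`. -/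
theorem interaction_L2_energy_estimate :
    ∃ C : ℝ, 0 < C ∧ ∀ (Cinf : ℝ) (f g : E2 → ℝ),
      Differentiable ℝ f → Differentiable ℝ g →
      MemLp (fun x => f x - Cinf) 2 volume →
      BddAbove (Set.range fun x => ‖gradient f x‖) →
      BddAbove (Set.range fun x => ‖gradient g x‖) →
      BddAbove (Set.range fun p : E2 × E2 => dd f g p.1 p.2) →
      (∫⁻ y : E2, ∫⁻ x : E2, ENNReal.ofReal
          (|f x - Cinf| ^ 2 * (|f x - g (x - y)| *
            |⟪gradient f x - gradient g (x - y), y⟫|) /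
            (‖y‖ ^ 2 + (f x - g (x - y)) ^ 2) ^ (5 / 2 : ℝ))) ≤
        ENNReal.ofReal (C * l2norm (fun x => f x - Cinf) ^ 2 *
          ((⨆ x : E2, ‖gradient f x‖) + ⨆ x : E2, ‖gradient g x‖) *
          ((⨆ p : E2 × E2, dd f g p.1 p.2) ^ 3 + 1)) := by
  have hint : Integrable (fun y : E2 => ((1 : ℝ) + ‖y‖ ^ 2) ^ (-(3 : ℝ) / 2)) volume := by
    have h := integrable_rpow_neg_one_add_norm_sq (E := E2) (μ := volume) (r := 3)
      (by rw [finrank_euclideanSpace_fin]; norm_num)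
    simpa using h
  set Jr : ℝ := ∫ y : E2, ((1 : ℝ) + ‖y‖ ^ 2) ^ (-(3 : ℝ) / 2) with hJr
  have hJrnn : 0 ≤ Jr :=
    integral_nonneg fun y => Real.rpow_nonneg (by positivity) _
  have htn : (0 : ℝ) ≤ 2 ^ ((3 : ℝ) / 2) := Real.rpow_nonneg (by norm_num) _
  refine ⟨2 ^ ((3 : ℝ) / 2) * Jr + 1, by positivity, ?_⟩
  intro Cinf f g hf hg hL2 hbf hbg hbdd
  set Mf := ⨆ x : E2, ‖gradient f x‖ with hMf
  set Mg := ⨆ x : E2, ‖gradient g x‖ with hMg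
  set D := ⨆ p : E2 × E2, dd f g p.1 p.2 with hDdef
  have hgf : ∀ x, ‖gradient f x‖ ≤ Mf := fun x => le_ciSup hbf x
  have hgg : ∀ x, ‖gradient g x‖ ≤ Mg := fun x => le_ciSup hbg x
  have hDle : ∀ x y, dd f g x y ≤ D := fun x y => le_ciSup hbdd (x, y)
  have hdd0 : ∀ x y : E2, 0 ≤ dd f g x y := fun x y => Real.rpow_nonneg (by positivity) _
  have hD0 : 0 ≤ D := (hdd0 0 0).trans (hDle 0 0)
  have hMf0 : 0 ≤ Mf := (norm_nonneg _).trans (hgf 0)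
  have hMg0 : 0 ≤ Mg := (norm_nonneg _).trans (hgg 0)
  set w : E2 → ℝ := fun y => ((1 : ℝ) + ‖y‖ ^ 2) ^ (-(3 : ℝ) / 2) with hw
  set c : E2 → ℝ := fun y => ((Mf + Mg) * (2 ^ ((3 : ℝ) / 2) * (D ^ 3 + 1))) * w y with hc
  have hwnn : ∀ y, 0 ≤ w y := fun y => Real.rpow_nonneg (by positivity) _
  have hKnn : (0 : ℝ) ≤ (Mf + Mg) * (2 ^ ((3 : ℝ) / 2) * (D ^ 3 + 1)) := by
    have hD3 : (0:ℝ) ≤ D ^ 3 + 1 := by positivity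
    exact mul_nonneg (add_nonneg hMf0 hMg0) (mul_nonneg htn hD3)
  -- the pointwise bound
  have key : ∀ x y : E2,
      |f x - Cinf| ^ 2 * (|f x - g (x - y)| *
          |⟪gradient f x - gradient g (x - y), y⟫|) /
        (‖y‖ ^ 2 + (f x - g (x - y)) ^ 2) ^ (5 / 2 : ℝ)
      ≤ |f x - Cinf| ^ 2 * c y := by
    intro x y
    have hcynn : 0 ≤ c y := mul_nonneg hKnn (hwnn y)
    set d : ℝ := f x - g (x - y) with hd
    set s : ℝ := ‖y‖ ^ 2 + d ^ 2 with hs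
    have hs0 : 0 ≤ s := by positivity
    rcases eq_or_lt_of_le hs0 with h0 | hspos
    · have hd0 : d = 0 := by nlinarith [sq_nonneg ‖y‖, sq_nonneg d]
      rw [hd0]
      simp only [abs_zero, zero_mul, mul_zero, zero_div]
      positivity
    · have hvy : |⟪gradient f x - gradient g (x - y), y⟫| ≤ (Mf + Mg) * ‖y‖ := by
        refine (abs_real_inner_le_norm _ _).trans
          (mul_le_mul_of_nonneg_right ?_ (norm_nonneg y))
        exact (norm_sub_le _ _).trans (add_le_add (hgf x) (hgg (x - y)))
      have hds : |d| ≤ Real.sqrt s := by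
        rw [← Real.sqrt_sq_eq_abs]
        exact Real.sqrt_le_sqrt (by nlinarith [sq_nonneg ‖y‖])
      have hys : ‖y‖ ≤ Real.sqrt s := by
        have h' : ‖y‖ = Real.sqrt (‖y‖ ^ 2) := (Real.sqrt_sq (norm_nonneg y)).symm
        rw [h']
        exact Real.sqrt_le_sqrt (by nlinarith [sq_nonneg d])
      have hnum : |d| * |⟪gradient f x - gradient g (x - y), y⟫| ≤ (Mf + Mg) * s := by
        calc |d| * |⟪gradient f x - gradient g (x - y), y⟫|
            ≤ Real.sqrt s * ((Mf + Mg) * Real.sqrt s) := by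
              refine mul_le_mul hds (hvy.trans ?_) (abs_nonneg _) (Real.sqrt_nonneg s)
              exact mul_le_mul_of_nonneg_left hys (add_nonneg hMf0 hMg0)
          _ = (Mf + Mg) * (Real.sqrt s * Real.sqrt s) := by ring
          _ = (Mf + Mg) * s := by rw [Real.mul_self_sqrt hs0]
      have hdd : dd f g x y = s ^ (-(1 / 2 : ℝ)) := by rw [hs, hd]; rfl
      have hker : s ^ (-(3 : ℝ) / 2)
          ≤ 2 ^ ((3 : ℝ) / 2) * (D ^ 3 + 1) * w y := by
        refine aux_kernel_bound s ‖y‖ D hspos (by nlinarith [sq_nonneg d]) ?_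
        rw [← hdd]; exact hDle x y
      have hs52 : (0 : ℝ) < s ^ (5 / 2 : ℝ) := Real.rpow_pos_of_pos hspos _
      have hss : s / s ^ (5 / 2 : ℝ) = s ^ (-(3 : ℝ) / 2) := by
        rw [show s / s ^ (5 / 2 : ℝ) = s ^ (1 : ℝ) / s ^ (5 / 2 : ℝ) by rw [Real.rpow_one],
          ← Real.rpow_sub hspos]
        norm_num
      calc |f x - Cinf| ^ 2 * (|d| * |⟪gradient f x - gradient g (x - y), y⟫|) /
            s ^ (5 / 2 : ℝ)
          ≤ |f x - Cinf| ^ 2 * ((Mf + Mg) * s) / s ^ (5 / 2 : ℝ) := by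
            gcongr
        _ = |f x - Cinf| ^ 2 * (Mf + Mg) * (s / s ^ (5 / 2 : ℝ)) := by ring
        _ = |f x - Cinf| ^ 2 * (Mf + Mg) * s ^ (-(3 : ℝ) / 2) := by rw [hss]
        _ ≤ |f x - Cinf| ^ 2 * (Mf + Mg) *
              (2 ^ ((3 : ℝ) / 2) * (D ^ 3 + 1) * w y) := by
            refine mul_le_mul_of_nonneg_left hker ?_
            exact mul_nonneg (by positivity) (add_nonneg hMf0 hMg0)
        _ = |f x - Cinf| ^ 2 * c y := by rw [hc]; ring
  -- integrability of the square
  have hsqint : Integrable (fun x : E2 => (f x - Cinf) ^ 2) volume := hL2.integrable_sq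
  have hIeq : (∫⁻ x : E2, ENNReal.ofReal (|f x - Cinf| ^ 2))
      = ENNReal.ofReal (∫ x : E2, (f x - Cinf) ^ 2) := by
    rw [ofReal_integral_eq_lintegral_ofReal hsqint
      (Eventually.of_forall fun x => sq_nonneg _)]
    exact lintegral_congr fun x => by rw [sq_abs]
  have hWeq : (∫⁻ y : E2, ENNReal.ofReal (w y)) = ENNReal.ofReal Jr :=
    (ofReal_integral_eq_lintegral_ofReal hint
      (Eventually.of_forall fun y => hwnn y)).symm
  have hsqnn : 0 ≤ ∫ x : E2, (f x - Cinf) ^ 2 := integral_nonneg fun x => sq_nonneg _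
  have hl2 : l2norm (fun x => f x - Cinf) ^ 2 = ∫ x : E2, (f x - Cinf) ^ 2 := by
    rw [l2norm, ← Real.rpow_natCast _ 2, ← Real.rpow_mul hsqnn]
    norm_num
  calc (∫⁻ y : E2, ∫⁻ x : E2, ENNReal.ofReal
          (|f x - Cinf| ^ 2 * (|f x - g (x - y)| *
            |⟪gradient f x - gradient g (x - y), y⟫|) /
            (‖y‖ ^ 2 + (f x - g (x - y)) ^ 2) ^ (5 / 2 : ℝ)))
      ≤ ∫⁻ y : E2, ∫⁻ x : E2, ENNReal.ofReal (|f x - Cinf| ^ 2 * c y) :=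
        lintegral_mono fun y => lintegral_mono fun x =>
          ENNReal.ofReal_le_ofReal (key x y)
    _ = ∫⁻ y : E2, (∫⁻ x : E2, ENNReal.ofReal (|f x - Cinf| ^ 2)) *
          ENNReal.ofReal (c y) := by
        refine lintegral_congr fun y => ?_
        calc ∫⁻ x : E2, ENNReal.ofReal (|f x - Cinf| ^ 2 * c y)
            = ∫⁻ x : E2, ENNReal.ofReal (|f x - Cinf| ^ 2) * ENNReal.ofReal (c y) :=
              lintegral_congr fun x => ENNReal.ofReal_mul (by positivity)
          _ = _ := lintegral_mul_const' _ _ ENNReal.ofReal_ne_top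
    _ = (∫⁻ x : E2, ENNReal.ofReal (|f x - Cinf| ^ 2)) *
          ∫⁻ y : E2, ENNReal.ofReal (c y) :=
        lintegral_const_mul' _ _ (by rw [hIeq]; exact ENNReal.ofReal_ne_top)
    _ = ENNReal.ofReal (∫ x : E2, (f x - Cinf) ^ 2) *
          (ENNReal.ofReal ((Mf + Mg) * (2 ^ ((3 : ℝ) / 2) * (D ^ 3 + 1))) *
            ENNReal.ofReal Jr) := by
        rw [hIeq]
        congr 1
        calc ∫⁻ y : E2, ENNReal.ofReal (c y)
            = ∫⁻ y : E2, ENNReal.ofReal ((Mf + Mg) * (2 ^ ((3 : ℝ) / 2) * (D ^ 3 + 1))) *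
                ENNReal.ofReal (w y) :=
              lintegral_congr fun y => ENNReal.ofReal_mul hKnn
          _ = ENNReal.ofReal ((Mf + Mg) * (2 ^ ((3 : ℝ) / 2) * (D ^ 3 + 1))) *
                ∫⁻ y : E2, ENNReal.ofReal (w y) :=
              lintegral_const_mul' _ _ ENNReal.ofReal_ne_top
          _ = _ := by rw [hWeq]
    _ ≤ ENNReal.ofReal ((2 ^ ((3 : ℝ) / 2) * Jr + 1) * l2norm (fun x => f x - Cinf) ^ 2 *
          (Mf + Mg) * (D ^ 3 + 1)) := by
        rw [← ENNReal.ofReal_mul hKnn, ← ENNReal.ofReal_mul hsqnn]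
        apply ENNReal.ofReal_le_ofReal
        rw [hl2]
        nlinarith [mul_nonneg (mul_nonneg hsqnn (add_nonneg hMf0 hMg0))
          (by positivity : (0:ℝ) ≤ D ^ 3 + 1),
          mul_nonneg htn hJrnn, hsqnn, hKnn, hJrnn]
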